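/- Let (a₁,a₂,a₃,a₄,a₅) be a tuple of positive integers with a₁ = 1 and aᵢ ≤ a_{i+1} ≤ a₁+⋯+aᵢ+1 for i = 1,2,3,4. Then for every integer m ≥ 3 and every positive integer N, the m-gonal form ⟨a₁,…,a₅⟩_m locally represents N; that is, for every prime p the equation a₁P_m(x₁)+⋯+a₅P_m(x₅) = N has a solution in ℤ_p⁵. -/

import Mathlib

open Polynomial

lemma quadSolve {p : ℕ} [Fact p.Prime] (A B C x₀ : ℤ_[p])
    (h : ‖A*x₀^2 + B*x₀ + C‖ < ‖2*A*x₀ + B‖^2) :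
    ∃ x : ℤ_[p], A*x^2 + B*x + C = 0 := by
  set F : Polynomial ℤ_[p] := Polynomial.C A * X^2 + Polynomial.C B * X + Polynomial.C C with hF
  have hev : ∀ y, F.eval y = A*y^2 + B*y + C := by intro y; simp [hF]
  have hdev : ∀ y, F.derivative.eval y = 2*A*y + B := by
    intro y; simp [hF, derivative_pow]; ring
  have hn : ‖F.eval x₀‖ < ‖F.derivative.eval x₀‖^2 := by rw [hev, hdev]; exact h
  obtain ⟨z, hz, -⟩ := hensels_lemma hn
  exact ⟨z, by rw [Polynomial.coe_aeval_eq_eval, hev z] at hz; exact hz⟩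

lemma norm_lt_one_iff_toZMod {p : ℕ} [Fact p.Prime] (z : ℤ_[p]) :
    ‖z‖ < 1 ↔ PadicInt.toZMod z = 0 := by
  rw [PadicInt.norm_lt_one_iff_dvd, ← Ideal.mem_span_singleton,
    ← PadicInt.maximalIdeal_eq_span_p, ← PadicInt.ker_toZMod, RingHom.mem_ker]

lemma norm_one_of_toZMod {p : ℕ} [Fact p.Prime] {z : ℤ_[p]} (h : PadicInt.toZMod z ≠ 0) :
    ‖z‖ = 1 :=
  le_antisymm (PadicInt.norm_le_one z)
    (not_lt.mp fun hl => h ((norm_lt_one_iff_toZMod z).mp hl))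

lemma norm_int_one' {p : ℕ} [Fact p.Prime] {k : ℤ} (h : ¬(p:ℤ) ∣ k) : ‖(k:ℤ_[p])‖ = 1 :=
  le_antisymm (PadicInt.norm_le_one _)
    (not_lt.mp fun hl => h ((PadicInt.norm_int_lt_one_iff_dvd k).mp hl))


lemma pow_dvd_iff_toZModPow {p : ℕ} [Fact p.Prime] (x : ℤ_[p]) (n : ℕ) :
    (p:ℤ_[p])^n ∣ x ↔ PadicInt.toZModPow n x = 0 := by
  rw [← Ideal.mem_span_singleton, ← PadicInt.ker_toZModPow, RingHom.mem_ker]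

lemma pow_dvd_iff_norm_le {p : ℕ} [Fact p.Prime] (x : ℤ_[p]) (n : ℕ) :
    (p:ℤ_[p])^n ∣ x ↔ ‖x‖ ≤ (p:ℝ)^(-(n:ℤ)) := by
  rw [PadicInt.norm_le_pow_iff_mem_span_pow, Ideal.mem_span_singleton]

lemma dvd2_iff (x : ℤ_[2]) (n : ℕ) : (2:ℤ_[2])^n ∣ x ↔ PadicInt.toZModPow n x = 0 := by
  have h : ((2:ℕ):ℤ_[2]) = 2 := by norm_cast
  rw [← h]; exact pow_dvd_iff_toZModPow x n

lemma dvd2_norm (x : ℤ_[2]) (n : ℕ) : (2:ℤ_[2])^n ∣ x ↔ ‖x‖ ≤ (2:ℝ)^(-(n:ℤ)) := by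
  have h : ((2:ℕ):ℤ_[2]) = 2 := by norm_cast
  have h2 : ((2:ℕ):ℝ) = 2 := by norm_cast
  rw [← h, ← h2]; exact pow_dvd_iff_norm_le x n


lemma norm_two_padic2 : ‖(2:ℤ_[2])‖ = 2⁻¹ := by
  have : ((2:ℕ):ℤ_[2]) = (2:ℤ_[2]) := by norm_cast
  rw [← this, PadicInt.norm_p]; norm_num

lemma sq2 (c : ℤ_[2]) (h : (8:ℤ_[2]) ∣ (c - 1)) : ∃ u : ℤ_[2], u^2 = c := by
  obtain ⟨x, hx⟩ := quadSolve (1:ℤ_[2]) 0 (-c) 1 (by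
    have h1 : ‖(1:ℤ_[2])*1^2 + 0*1 + (-c)‖ ≤ 8⁻¹ := by
      have : (1:ℤ_[2])*1^2 + 0*1 + (-c) = -(c - 1) := by ring
      rw [this, norm_neg]
      obtain ⟨S, hS⟩ := h
      rw [hS, norm_mul]
      have h8 : ‖(8:ℤ_[2])‖ = 8⁻¹ := by
        have : (8:ℤ_[2]) = 2^3 := by norm_num
        rw [this, norm_pow, norm_two_padic2]; norm_num
      rw [h8]
      calc 8⁻¹ * ‖S‖ ≤ 8⁻¹ * 1 := by
            apply mul_le_mul_of_nonneg_left (PadicInt.norm_le_one S); norm_num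
        _ = 8⁻¹ := by ring
    have h2 : ‖2*(1:ℤ_[2])*1 + 0‖ = 2⁻¹ := by
      have : 2*(1:ℤ_[2])*1 + 0 = 2 := by ring
      rw [this, norm_two_padic2]
    rw [h2]
    calc ‖(1:ℤ_[2])*1^2 + 0*1 + (-c)‖ ≤ 8⁻¹ := h1
      _ < (2⁻¹)^2 := by norm_num)
  refine ⟨x, ?_⟩
  have : x^2 = c := by linear_combination hx
  exact this

lemma Ubase_coord {R : ℤ_[2]} {aj σ : ℤ} (haj : aj % 4 = 1 ∨ aj % 4 = 2 ∨ aj % 4 = 3)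
    (hσ : σ = 1 ∨ σ = 3) (h16 : (16:ℤ_[2]) ∣ (R - ((aj*σ^2 : ℤ) : ℤ_[2]))) :
    ∃ u : ℤ_[2], (aj:ℤ_[2]) * u^2 = R := by
  have hcase : aj % 2 = 1 ∨ aj % 4 = 2 := by omega
  have hσ2 : σ^2 - 1 = 0 ∨ σ^2 - 1 = 8 := by rcases hσ with h|h <;> subst h <;> norm_num
  rcases hcase with hodd | heven
  · -- aj odd
    have hnd : ¬((2:ℕ):ℤ) ∣ aj := by omega
    have hu : IsUnit ((aj:ℤ):ℤ_[2]) := PadicInt.isUnit_iff.mpr (by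
      exact le_antisymm (PadicInt.norm_le_one _)
        (not_lt.mp fun hl => hnd ((PadicInt.norm_int_lt_one_iff_dvd aj).mp hl)))
    obtain ⟨v, hv⟩ := hu.exists_right_inv
    have h8 : (8:ℤ_[2]) ∣ (R - (aj:ℤ_[2])) := by
      have e : R - (aj:ℤ_[2]) = (R - ((aj*σ^2 : ℤ) : ℤ_[2])) + ((aj*(σ^2-1) : ℤ) : ℤ_[2]) := by
        push_cast; ring
      rw [e]
      apply dvd_add
      · exact dvd_trans ⟨2, by norm_num⟩ h16
      · rcases hσ2 with h|h <;> rw [h]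
        · simp
        · exact ⟨(aj:ℤ_[2]), by push_cast; ring⟩
    obtain ⟨S, hS⟩ := h8
    obtain ⟨u, hu2⟩ := sq2 (1 + 8*(v*S)) (by ring_nf; exact ⟨v*S, by ring⟩)
    exact ⟨u, by rw [hu2]; linear_combination (-1)*hS + (8*S)*hv⟩
  · -- aj ≡ 2 mod 4
    obtain ⟨b, hb, hbodd⟩ : ∃ b, aj = 2*b ∧ b % 2 = 1 := ⟨aj/2, by omega, by omega⟩
    have hnd : ¬((2:ℕ):ℤ) ∣ b := by omega
    have hu : IsUnit ((b:ℤ):ℤ_[2]) := PadicInt.isUnit_iff.mpr (by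
      exact le_antisymm (PadicInt.norm_le_one _)
        (not_lt.mp fun hl => hnd ((PadicInt.norm_int_lt_one_iff_dvd b).mp hl)))
    obtain ⟨v, hv⟩ := hu.exists_right_inv
    have h16' : (16:ℤ_[2]) ∣ (R - 2*(b:ℤ_[2])) := by
      have e : R - 2*(b:ℤ_[2]) = (R - ((aj*σ^2 : ℤ) : ℤ_[2])) + ((2*b*(σ^2-1) : ℤ) : ℤ_[2]) := by
        rw [hb]; push_cast; ring
      rw [e]
      apply dvd_add h16
      rcases hσ2 with h|h <;> rw [h]
      · simp
      · exact ⟨(b:ℤ_[2]), by push_cast; ring⟩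
    obtain ⟨S, hS⟩ := h16'
    obtain ⟨u, hu2⟩ := sq2 (1 + 8*(v*S)) (by ring_nf; exact ⟨v*S, by ring⟩)
    refine ⟨u, ?_⟩
    rw [hu2, hb]
    push_cast
    linear_combination (-1)*hS + (16*S)*hv

set_option maxRecDepth 100000 in
set_option maxHeartbeats 4000000 in
lemma COV (a2 a3 a4 a5 : ℤ) (h2 : 1 ≤ a2 ∧ a2 ≤ 2) (h3 : a2 ≤ a3 ∧ a3 ≤ a2+2)
    (h4 : a3 ≤ a4 ∧ a4 ≤ a2+a3+2) (h5 : a4 ≤ a5 ∧ a5 ≤ a2+a3+a4+2)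
    (d : ZMod (2^4)) (hd : ¬(d = 0 ∨ d = 4 ∨ d = 8 ∨ d = 12)) :
    ∃ σ ∈ ({1,3} : Finset ℤ), ∃ c1 ∈ ({0,1,2} : Finset ℤ), ∃ c2 ∈ ({0,1,2} : Finset ℤ),
      ∃ c3 ∈ ({0,1,2} : Finset ℤ), ∃ c4 ∈ ({0,1,2} : Finset ℤ),
      (((σ^2 + a2*c1^2 + a3*c2^2 + a4*c3^2 + a5*c4^2 : ℤ) : ZMod (2^4)) = d)
      ∨ (a2 % 4 ≠ 0 ∧ ((c1^2 + a2*σ^2 + a3*c2^2 + a4*c3^2 + a5*c4^2 : ℤ) : ZMod (2^4)) = d)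
      ∨ (a3 % 4 ≠ 0 ∧ ((c1^2 + a2*c2^2 + a3*σ^2 + a4*c3^2 + a5*c4^2 : ℤ) : ZMod (2^4)) = d)
      ∨ (a4 % 4 ≠ 0 ∧ ((c1^2 + a2*c2^2 + a3*c3^2 + a4*σ^2 + a5*c4^2 : ℤ) : ZMod (2^4)) = d)
      ∨ (a5 % 4 ≠ 0 ∧ ((c1^2 + a2*c2^2 + a3*c3^2 + a4*c4^2 + a5*σ^2 : ℤ) : ZMod (2^4)) = d) := by
  obtain ⟨h2a, h2b⟩ := h2; obtain ⟨h3a, h3b⟩ := h3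
  obtain ⟨h4a, h4b⟩ := h4; obtain ⟨h5a, h5b⟩ := h5
  interval_cases a2 <;> interval_cases a3 <;> interval_cases a4 <;> interval_cases a5 <;>
    revert hd <;> revert d <;> decide

lemma Ulem (a2 a3 a4 a5 : ℤ) (h2 : 1 ≤ a2 ∧ a2 ≤ 2) (h3 : a2 ≤ a3 ∧ a3 ≤ a2+2)
    (h4 : a3 ≤ a4 ∧ a4 ≤ a2+a3+2) (h5 : a4 ≤ a5 ∧ a5 ≤ a2+a3+a4+2) (D : ℤ_[2]) :
    ∃ u1 u2 u3 u4 u5 : ℤ_[2],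
      u1^2 + a2*u2^2 + a3*u3^2 + a4*u4^2 + a5*u5^2 = D := by
  have key : ∀ n : ℕ, ∀ D : ℤ_[2], ¬ ((2:ℤ_[2])^n ∣ D) →
      ∃ u1 u2 u3 u4 u5 : ℤ_[2], u1^2 + a2*u2^2 + a3*u3^2 + a4*u4^2 + a5*u5^2 = D := by
    intro n
    induction n using Nat.strong_induction_on with
    | _ n ih =>
      intro D hD
      by_cases hdvd4 : (2:ℤ_[2])^2 ∣ D
      · -- descent
        obtain ⟨D', rfl⟩ := hdvd4
        have hn2 : 2 ≤ n := by
          rcases n with _|m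
          · exact absurd (by rw [pow_zero]; exact one_dvd _) hD
          rcases m with _|m
          · exact absurd (by rw [pow_one]; exact ⟨2*D', by ring⟩) hD
          · omega
        have hD' : ¬ ((2:ℤ_[2])^(n-2) ∣ D') := by
          intro ⟨E, hE⟩
          exact hD ⟨E, by rw [hE, ← mul_assoc, ← pow_add]; congr 2; omega⟩
        obtain ⟨u1, u2, u3, u4, u5, hu⟩ := ih (n-2) (by omega) D' hD'
        exact ⟨2*u1, 2*u2, 2*u3, 2*u4, 2*u5, by ring_nf; ring_nf at hu; linear_combination (4:ℤ_[2])*hu⟩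
      · -- base case
        set d : ZMod (2^4) := PadicInt.toZModPow 4 D with hdd
        have hd : ¬(d = 0 ∨ d = 4 ∨ d = 8 ∨ d = 12) := by
          rintro (h|h|h|h)
          · have h4 : (2:ℤ_[2])^4 ∣ D := (dvd2_iff D 4).mpr (by rw [← hdd]; exact h)
            obtain ⟨E, hE⟩ := h4
            exact hdvd4 ⟨4*E, by linear_combination hE⟩
          · have h4 : (2:ℤ_[2])^4 ∣ (D - 4) := by
              rw [dvd2_iff, map_sub, ← hdd, h, map_ofNat, sub_self]
            obtain ⟨E, hE⟩ := h4
            exact hdvd4 ⟨1 + 4*E, by linear_combination hE⟩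
          · have h4 : (2:ℤ_[2])^4 ∣ (D - 8) := by
              rw [dvd2_iff, map_sub, ← hdd, h, map_ofNat, sub_self]
            obtain ⟨E, hE⟩ := h4
            exact hdvd4 ⟨2 + 4*E, by linear_combination hE⟩
          · have h4 : (2:ℤ_[2])^4 ∣ (D - 12) := by
              rw [dvd2_iff, map_sub, ← hdd, h, map_ofNat, sub_self]
            obtain ⟨E, hE⟩ := h4
            exact hdvd4 ⟨3 + 4*E, by linear_combination hE⟩
        obtain ⟨σ, hσm, c1, hc1, c2, hc2, c3, hc3, c4, hc4, hcase⟩ := COV a2 a3 a4 a5 h2 h3 h4 h5 d hd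
        have hσ : σ = 1 ∨ σ = 3 := by simpa using hσm
        have key16 : ∀ s : ℤ, ((s : ℤ_[2]) : ℤ_[2]) = (s:ℤ_[2]) := fun s => rfl
        have bridge : ∀ s : ℤ, ((s : ZMod (2^4)) = d) → (16:ℤ_[2]) ∣ (D - (s:ℤ_[2])) := by
          intro s hs
          have : (2:ℤ_[2])^4 ∣ (D - (s:ℤ_[2])) := by
            rw [dvd2_iff, map_sub, map_intCast, hs, ← hdd, sub_self]
          exact dvd_trans (by norm_num) this
        rcases hcase with h|⟨hj,h⟩|⟨hj,h⟩|⟨hj,h⟩|⟨hj,h⟩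
        · -- j = 1, a1 = 1
          have h16 : (16:ℤ_[2]) ∣ ((D - ((a2*c1^2 + a3*c2^2 + a4*c3^2 + a5*c4^2 : ℤ) : ℤ_[2])) - (((1:ℤ)*σ^2 : ℤ) : ℤ_[2])) := by
            have := bridge _ h
            have e : (D - ((a2*c1^2 + a3*c2^2 + a4*c3^2 + a5*c4^2 : ℤ) : ℤ_[2])) - (((1:ℤ)*σ^2 : ℤ) : ℤ_[2])
                = D - ((σ^2 + a2*c1^2 + a3*c2^2 + a4*c3^2 + a5*c4^2 : ℤ) : ℤ_[2]) := by push_cast; ring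
            rw [e]; exact this
          obtain ⟨u, hu⟩ := Ubase_coord (aj := 1) (by norm_num) hσ h16
          refine ⟨u, (c1:ℤ_[2]), (c2:ℤ_[2]), (c3:ℤ_[2]), (c4:ℤ_[2]), ?_⟩
          push_cast at hu ⊢
          linear_combination hu
        · have h16 : (16:ℤ_[2]) ∣ ((D - ((c1^2 + a3*c2^2 + a4*c3^2 + a5*c4^2 : ℤ) : ℤ_[2])) - ((a2*σ^2 : ℤ) : ℤ_[2])) := by
            have := bridge _ h
            have e : (D - ((c1^2 + a3*c2^2 + a4*c3^2 + a5*c4^2 : ℤ) : ℤ_[2])) - ((a2*σ^2 : ℤ) : ℤ_[2])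
                = D - ((c1^2 + a2*σ^2 + a3*c2^2 + a4*c3^2 + a5*c4^2 : ℤ) : ℤ_[2]) := by push_cast; ring
            rw [e]; exact this
          obtain ⟨u, hu⟩ := Ubase_coord (by omega : a2 % 4 = 1 ∨ a2 % 4 = 2 ∨ a2 % 4 = 3) hσ h16
          refine ⟨(c1:ℤ_[2]), u, (c2:ℤ_[2]), (c3:ℤ_[2]), (c4:ℤ_[2]), ?_⟩
          push_cast at hu ⊢
          linear_combination hu
        · have h16 : (16:ℤ_[2]) ∣ ((D - ((c1^2 + a2*c2^2 + a4*c3^2 + a5*c4^2 : ℤ) : ℤ_[2])) - ((a3*σ^2 : ℤ) : ℤ_[2])) := by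
            have := bridge _ h
            have e : (D - ((c1^2 + a2*c2^2 + a4*c3^2 + a5*c4^2 : ℤ) : ℤ_[2])) - ((a3*σ^2 : ℤ) : ℤ_[2])
                = D - ((c1^2 + a2*c2^2 + a3*σ^2 + a4*c3^2 + a5*c4^2 : ℤ) : ℤ_[2]) := by push_cast; ring
            rw [e]; exact this
          obtain ⟨u, hu⟩ := Ubase_coord (by omega : a3 % 4 = 1 ∨ a3 % 4 = 2 ∨ a3 % 4 = 3) hσ h16
          refine ⟨(c1:ℤ_[2]), (c2:ℤ_[2]), u, (c3:ℤ_[2]), (c4:ℤ_[2]), ?_⟩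
          push_cast at hu ⊢
          linear_combination hu
        · have h16 : (16:ℤ_[2]) ∣ ((D - ((c1^2 + a2*c2^2 + a3*c3^2 + a5*c4^2 : ℤ) : ℤ_[2])) - ((a4*σ^2 : ℤ) : ℤ_[2])) := by
            have := bridge _ h
            have e : (D - ((c1^2 + a2*c2^2 + a3*c3^2 + a5*c4^2 : ℤ) : ℤ_[2])) - ((a4*σ^2 : ℤ) : ℤ_[2])
                = D - ((c1^2 + a2*c2^2 + a3*c3^2 + a4*σ^2 + a5*c4^2 : ℤ) : ℤ_[2]) := by push_cast; ring
            rw [e]; exact this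
          obtain ⟨u, hu⟩ := Ubase_coord (by omega : a4 % 4 = 1 ∨ a4 % 4 = 2 ∨ a4 % 4 = 3) hσ h16
          refine ⟨(c1:ℤ_[2]), (c2:ℤ_[2]), (c3:ℤ_[2]), u, (c4:ℤ_[2]), ?_⟩
          push_cast at hu ⊢
          linear_combination hu
        · have h16 : (16:ℤ_[2]) ∣ ((D - ((c1^2 + a2*c2^2 + a3*c3^2 + a4*c4^2 : ℤ) : ℤ_[2])) - ((a5*σ^2 : ℤ) : ℤ_[2])) := by
            have := bridge _ h
            have e : (D - ((c1^2 + a2*c2^2 + a3*c3^2 + a4*c4^2 : ℤ) : ℤ_[2])) - ((a5*σ^2 : ℤ) : ℤ_[2])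
                = D - ((c1^2 + a2*c2^2 + a3*c3^2 + a4*c4^2 + a5*σ^2 : ℤ) : ℤ_[2]) := by push_cast; ring
            rw [e]; exact this
          obtain ⟨u, hu⟩ := Ubase_coord (by omega : a5 % 4 = 1 ∨ a5 % 4 = 2 ∨ a5 % 4 = 3) hσ h16
          refine ⟨(c1:ℤ_[2]), (c2:ℤ_[2]), (c3:ℤ_[2]), (c4:ℤ_[2]), u, ?_⟩
          push_cast at hu ⊢
          linear_combination hu
  rcases eq_or_ne D 0 with rfl | hD0
  · exact ⟨0,0,0,0,0, by ring⟩
  · have hpos : 0 < ‖D‖ := norm_pos_iff.mpr hD0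
    obtain ⟨n, hn⟩ := PadicInt.exists_pow_neg_lt 2 hpos
    refine key n D (fun hdvd => ?_)
    have h1 := (dvd2_norm D n).mp hdvd
    have h2 : ((2:ℕ):ℝ) = 2 := by norm_cast
    rw [h2] at hn
    linarith

-- p = 3 binary forms
lemma bin3 (r : ℤ) (hr : r = 1 ∨ r = 2) (D : ℤ_[3]) (hD : ‖D‖ = 1) :
    ∃ x y : ℤ_[3], x^2 + (r:ℤ_[3])*y^2 = D := by
  have hd0 : PadicInt.toZMod D ≠ 0 := by
    intro h
    have := (norm_lt_one_iff_toZMod D).mpr h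
    rw [hD] at this
    exact lt_irrefl 1 this
  have hd : PadicInt.toZMod D = 1 ∨ PadicInt.toZMod D = 2 :=
    (by decide : ∀ e : ZMod 3, e ≠ 0 → e = 1 ∨ e = 2) _ hd0
  have h2n : ‖(2:ℤ_[3])‖ = 1 := by
    have e : ((2:ℤ):ℤ_[3]) = 2 := by norm_cast
    rw [← e]; exact norm_int_one' (by norm_num)
  have h4n : ‖(4:ℤ_[3])‖ = 1 := by
    have e : ((4:ℤ):ℤ_[3]) = 4 := by norm_cast
    rw [← e]; exact norm_int_one' (by norm_num)
  rcases hr with rfl|rfl <;> rcases hd with h|h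
  · obtain ⟨x, hx⟩ := quadSolve (1:ℤ_[3]) 0 (-D) 1 (by
      have e1 : (1:ℤ_[3])*1^2 + 0*1 + (-D) = 1 - D := by ring
      have e2 : (2:ℤ_[3])*1*1 + 0 = 2 := by ring
      rw [e1, e2, h2n]
      have : ‖(1:ℤ_[3]) - D‖ < 1 := by
        rw [norm_lt_one_iff_toZMod, map_sub, map_one, h]; ring
      simpa using this)
    exact ⟨x, 0, by push_cast; linear_combination hx⟩
  · obtain ⟨x, hx⟩ := quadSolve (1:ℤ_[3]) 0 (1-D) 1 (by
      have e1 : (1:ℤ_[3])*1^2 + 0*1 + (1-D) = 2 - D := by ring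
      have e2 : (2:ℤ_[3])*1*1 + 0 = 2 := by ring
      rw [e1, e2, h2n]
      have : ‖(2:ℤ_[3]) - D‖ < 1 := by
        rw [norm_lt_one_iff_toZMod, map_sub, map_ofNat, h]; ring
      simpa using this)
    exact ⟨x, 1, by push_cast; linear_combination hx⟩
  · obtain ⟨x, hx⟩ := quadSolve (1:ℤ_[3]) 0 (-D) 1 (by
      have e1 : (1:ℤ_[3])*1^2 + 0*1 + (-D) = 1 - D := by ring
      have e2 : (2:ℤ_[3])*1*1 + 0 = 2 := by ring
      rw [e1, e2, h2n]
      have : ‖(1:ℤ_[3]) - D‖ < 1 := by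
        rw [norm_lt_one_iff_toZMod, map_sub, map_one, h]; ring
      simpa using this)
    exact ⟨x, 0, by push_cast; linear_combination hx⟩
  · obtain ⟨y, hy⟩ := quadSolve (2:ℤ_[3]) 0 (-D) 1 (by
      have e1 : (2:ℤ_[3])*1^2 + 0*1 + (-D) = 2 - D := by ring
      have e2 : (2:ℤ_[3])*2*1 + 0 = 4 := by ring
      rw [e1, e2, h4n]
      have : ‖(2:ℤ_[3]) - D‖ < 1 := by
        rw [norm_lt_one_iff_toZMod, map_sub, map_ofNat, h]; ring
      simpa using this)
    exact ⟨0, y, by push_cast; linear_combination hy⟩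

lemma dvd3_iff (x : ℤ_[3]) (n : ℕ) : (3:ℤ_[3])^n ∣ x ↔ PadicInt.toZModPow n x = 0 := by
  have h : ((3:ℕ):ℤ_[3]) = 3 := by norm_cast
  rw [← h, ← Ideal.mem_span_singleton, ← PadicInt.ker_toZModPow, RingHom.mem_ker]

lemma dvd3_norm (x : ℤ_[3]) (n : ℕ) : (3:ℤ_[3])^n ∣ x ↔ ‖x‖ ≤ (3:ℝ)^(-(n:ℤ)) := by
  have h : ((3:ℕ):ℤ_[3]) = 3 := by norm_cast
  have h2 : ((3:ℕ):ℝ) = 3 := by norm_cast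
  rw [← h, ← h2, PadicInt.norm_le_pow_iff_mem_span_pow, Ideal.mem_span_singleton]

lemma R3 (a2 c4 c5 : ℤ) (ha2 : a2 = 1 ∨ a2 = 2) (hc4 : c4 = 1 ∨ c4 = 2) (D : ℤ_[3]) :
    ∃ u1 u2 u3 u4 u5 : ℤ_[3],
      u1^2 + (a2:ℤ_[3])*u2^2 + 3*u3^2 + (3*(c4:ℤ_[3]))*u4^2 + (3*(c5:ℤ_[3]))*u5^2 = D := by
  have key : ∀ n : ℕ, ∀ D : ℤ_[3], ¬ ((3:ℤ_[3])^n ∣ D) →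
      ∃ u1 u2 u3 u4 u5 : ℤ_[3],
        u1^2 + (a2:ℤ_[3])*u2^2 + 3*u3^2 + (3*(c4:ℤ_[3]))*u4^2 + (3*(c5:ℤ_[3]))*u5^2 = D := by
    intro n
    induction n using Nat.strong_induction_on with
    | _ n ih =>
      intro D hD
      by_cases hdvd9 : (3:ℤ_[3])^2 ∣ D
      · obtain ⟨D', rfl⟩ := hdvd9
        have hn2 : 2 ≤ n := by
          rcases n with _|m
          · exact absurd (by rw [pow_zero]; exact one_dvd _) hD
          rcases m with _|m
          · exact absurd (by rw [pow_one]; exact ⟨3*D', by ring⟩) hD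
          · omega
        have hD' : ¬ ((3:ℤ_[3])^(n-2) ∣ D') := by
          intro ⟨E, hE⟩
          exact hD ⟨E, by rw [hE, ← mul_assoc, ← pow_add]; congr 2; omega⟩
        obtain ⟨u1, u2, u3, u4, u5, hu⟩ := ih (n-2) (by omega) D' hD'
        refine ⟨3*u1, 3*u2, 3*u3, 3*u4, 3*u5, ?_⟩
        ring_nf
        ring_nf at hu
        linear_combination (9:ℤ_[3])*hu
      · by_cases hdvd3 : (3:ℤ_[3]) ∣ D
        · obtain ⟨D1, rfl⟩ := hdvd3
          have hD1 : ‖D1‖ = 1 := by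
            refine le_antisymm (PadicInt.norm_le_one _) (not_lt.mp fun hl => ?_)
            rw [norm_lt_one_iff_toZMod] at hl
            have h3 : ((3:ℕ):ℤ_[3]) = 3 := by norm_cast
            have : (3:ℤ_[3]) ∣ D1 := by
              rw [← h3, ← Ideal.mem_span_singleton, ← PadicInt.maximalIdeal_eq_span_p,
                ← PadicInt.ker_toZMod, RingHom.mem_ker]; exact hl
            obtain ⟨E, hE⟩ := this
            exact hdvd9 ⟨E, by rw [hE]; ring⟩
          obtain ⟨x, y, hxy⟩ := bin3 c4 hc4 D1 hD1
          exact ⟨0, 0, x, y, 0, by linear_combination (3:ℤ_[3])*hxy⟩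
        · have hDn : ‖D‖ = 1 := by
            refine le_antisymm (PadicInt.norm_le_one _) (not_lt.mp fun hl => ?_)
            rw [norm_lt_one_iff_toZMod] at hl
            have h3 : ((3:ℕ):ℤ_[3]) = 3 := by norm_cast
            refine hdvd3 ?_
            rw [← h3, ← Ideal.mem_span_singleton, ← PadicInt.maximalIdeal_eq_span_p,
              ← PadicInt.ker_toZMod, RingHom.mem_ker]; exact hl
          obtain ⟨x, y, hxy⟩ := bin3 a2 ha2 D hDn
          exact ⟨x, y, 0, 0, 0, by linear_combination hxy⟩
  rcases eq_or_ne D 0 with rfl | hD0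
  · exact ⟨0,0,0,0,0, by ring⟩
  · have hpos : 0 < ‖D‖ := norm_pos_iff.mpr hD0
    obtain ⟨n, hn⟩ := PadicInt.exists_pow_neg_lt 3 hpos
    refine key n D (fun hdvd => ?_)
    have h1 := (dvd3_norm D n).mp hdvd
    have h2 : ((3:ℕ):ℝ) = 3 := by norm_cast
    rw [h2] at hn
    linarith


lemma Ecore {p : ℕ} [Fact p.Prime] (hp : p ≠ 2) (B A2 A3 c : ℤ_[p])
    (hB : ‖B‖ = 1) (hA2 : ‖A2‖ = 1) (hA3 : ‖A3‖ = 1) :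
    ∃ x y z : ℤ_[p],
      (B*(x^2-x)+2*x) + A2*(B*(y^2-y)+2*y) + A3*(B*(z^2-z)+2*z) = c := by
  haveI : NeZero p := ⟨(Fact.out : p.Prime).ne_zero⟩
  set τ : ℤ_[p] →+* ZMod p := PadicInt.toZMod with hτ
  have hlift : ∀ w : ZMod p, τ ((w.val : ℕ) : ℤ_[p]) = w := by
    intro w
    rw [map_natCast]
    exact ZMod.natCast_rightInverse w
  have hunit : ∀ z : ℤ_[p], ‖z‖ = 1 → τ z ≠ 0 := by
    intro z hz h0
    have := (norm_lt_one_iff_toZMod z).mpr h0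
    rw [hz] at this
    exact lt_irrefl 1 this
  have hBn : τ B ≠ 0 := hunit B hB
  have hA2n : τ A2 ≠ 0 := hunit A2 hA2
  have hA3n : τ A3 ≠ 0 := hunit A3 hA3
  have hp2 : p % 2 = 1 := (Fact.out : p.Prime).eq_two_or_odd.resolve_left hp
  have htwo : (2 : ZMod p) ≠ 0 := by
    have : ¬ (p:ℤ) ∣ 2 := by
      intro hdvd
      have h1 : (p:ℤ) ≤ 2 := Int.le_of_dvd (by norm_num) hdvd
      have h2 : 2 ≤ p := (Fact.out : p.Prime).two_le
      exact hp (by omega)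
    intro h0
    have : ((2:ℤ) : ZMod p) = 0 := by exact_mod_cast h0
    rw [ZMod.intCast_zmod_eq_zero_iff_dvd] at this
    omega
  -- the noncritical point
  set zc : ZMod p := (τ B - 2) * (2 * τ B)⁻¹ + 1 with hzc
  have hcrit : τ B * (2*zc - 1) + 2 = 2 * τ B := by
    rw [hzc]
    have h2B : (2 * τ B) ≠ 0 := mul_ne_zero htwo hBn
    field_simp
    ring
  -- solve mod p in two variables
  set φz : ZMod p := τ B * (zc^2 - zc) + 2*zc with hφz
  set f : (ZMod p)[X] := Polynomial.C (τ B) * X^2 + Polynomial.C (2 - τ B) * X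
      + Polynomial.C (τ A3 * φz - τ c) with hf
  set g : (ZMod p)[X] := Polynomial.C (τ A2 * τ B) * X^2
      + Polynomial.C (τ A2 * (2 - τ B)) * X + Polynomial.C 0 with hg
  have hf2 : f.degree = 2 := Polynomial.degree_quadratic hBn
  have hg2 : g.degree = 2 := Polynomial.degree_quadratic (mul_ne_zero hA2n hBn)
  have hcard : Fintype.card (ZMod p) % 2 = 1 := by rw [ZMod.card]; exact hp2
  obtain ⟨xb, yb, hroot⟩ := FiniteField.exists_root_sum_quadratic hf2 hg2 hcard
  have hroot' : τ B * xb^2 + (2 - τ B) * xb + (τ A3 * φz - τ c)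
      + (τ A2 * τ B * yb^2 + τ A2 * (2 - τ B) * yb) = 0 := by
    have := hroot
    simp [hf, hg] at this
    linear_combination this
  -- lift
  set x : ℤ_[p] := ((xb.val : ℕ) : ℤ_[p]) with hx
  set y : ℤ_[p] := ((yb.val : ℕ) : ℤ_[p]) with hy
  set z₀ : ℤ_[p] := ((zc.val : ℕ) : ℤ_[p]) with hz₀
  -- Hensel on z
  obtain ⟨z, hzeq⟩ := quadSolve (A3*B) (A3*(2-B))
      ((B*(x^2-x)+2*x) + A2*(B*(y^2-y)+2*y) - c) z₀ (by
    have hder : τ (2*(A3*B)*z₀ + A3*(2-B)) = τ A3 * (2 * τ B) := by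
      simp [map_add, map_mul, map_sub, map_ofNat, hz₀, hlift zc]
      linear_combination τ A3 * hcrit - τ A3 * (τ B * (2 * zc - 1)) - 2 * τ A3
        + (τ A3 * τ B * zc) * 2 + τ A3 * 2 - τ A3 * τ B
    have hdern : ‖2*(A3*B)*z₀ + A3*(2-B)‖ = 1 := by
      apply norm_one_of_toZMod
      rw [hder]
      exact mul_ne_zero hA3n (mul_ne_zero htwo hBn)
    have hevn : ‖(A3*B)*z₀^2 + (A3*(2-B))*z₀ + ((B*(x^2-x)+2*x) + A2*(B*(y^2-y)+2*y) - c)‖ < 1 := by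
      rw [norm_lt_one_iff_toZMod]
      have expand : τ ((A3*B)*z₀^2 + (A3*(2-B))*z₀ + ((B*(x^2-x)+2*x) + A2*(B*(y^2-y)+2*y) - c))
          = (τ B * xb^2 + (2 - τ B) * xb + (τ A3 * φz - τ c)
            + (τ A2 * τ B * yb^2 + τ A2 * (2 - τ B) * yb)) := by
        simp [map_add, map_mul, map_sub, map_pow, map_ofNat, hx, hy, hz₀, hlift, hφz]
        ring
      rw [expand, hroot']
    rw [hdern]
    simpa using hevn)
  refine ⟨x, y, z, ?_⟩
  linear_combination hzeq

lemma onevar {p : ℕ} [Fact p.Prime] (b N : ℤ)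
    (h : ‖((b*(N^2-N) : ℤ) : ℤ_[p])‖ < ‖((b*(2*N-1)+2 : ℤ) : ℤ_[p])‖^2) :
    ∃ x : ℤ_[p], (b:ℤ_[p])*(x^2-x) + 2*x = 2*(N:ℤ_[p]) := by
  obtain ⟨x, hx⟩ := quadSolve (b:ℤ_[p]) (2-(b:ℤ_[p])) (-(2*(N:ℤ_[p]))) (N:ℤ_[p]) (by
    have e1 : (b:ℤ_[p])*((N:ℤ_[p]))^2 + (2-(b:ℤ_[p]))*(N:ℤ_[p]) + (-(2*(N:ℤ_[p])))
        = ((b*(N^2-N) : ℤ) : ℤ_[p]) := by push_cast; ring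
    have e2 : 2*(b:ℤ_[p])*(N:ℤ_[p]) + (2-(b:ℤ_[p])) = ((b*(2*N-1)+2 : ℤ) : ℤ_[p]) := by
      push_cast; ring
    rw [e1, e2]; exact h)
  exact ⟨x, by linear_combination hx⟩

-- branch A : p = 2, b odd
lemma branchA (b N : ℤ) (hb : b % 2 = 1) :
    ∃ x : ℤ_[2], (b:ℤ_[2])*(x^2-x) + 2*x = 2*(N:ℤ_[2]) := by
  apply onevar
  have hNN : (2:ℤ) ∣ N^2 - N := by
    rcases Int.even_or_odd N with ⟨c,hc⟩|⟨c,hc⟩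
    · exact ⟨c*(2*c-1), by rw [hc]; ring⟩
    · exact ⟨c*(2*c+1), by rw [hc]; ring⟩
  obtain ⟨c, hc⟩ := hNN
  have h1 : ‖((b*(N^2-N) : ℤ) : ℤ_[2])‖ ≤ ((2:ℕ):ℝ)^(-(1:ℕ):ℤ) :=
    PadicInt.norm_int_le_pow_iff_dvd.mpr (by
      refine (dvd_iff_exists_eq_mul_left.mpr ⟨b*c, ?_⟩)
      rw [hc]; push_cast; ring)
  have hodd : ∃ k, b*(2*N-1) = 2*k+1 := by
    obtain ⟨i, hi⟩ : ∃ i, b = 2*i+1 := ⟨b/2, by omega⟩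
    exact ⟨2*i*N - i + 2*N*0 + (N-1), by rw [hi]; ring⟩
  have h2 : ‖((b*(2*N-1)+2 : ℤ) : ℤ_[2])‖ = 1 := by
    apply norm_int_one'
    obtain ⟨k, hk⟩ := hodd
    rw [hk]
    intro ⟨d, hd⟩
    omega
  rw [h2]
  calc ‖((b*(N^2-N) : ℤ) : ℤ_[2])‖ ≤ ((2:ℕ):ℝ)^(-(1:ℕ):ℤ) := h1
    _ < 1^2 := by norm_num

-- branch B : p = 2, 4 ∣ b
lemma branchB (b N : ℤ) (hb : b % 4 = 0) :
    ∃ x : ℤ_[2], (b:ℤ_[2])*(x^2-x) + 2*x = 2*(N:ℤ_[2]) := by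
  apply onevar
  obtain ⟨e, he⟩ : ∃ e, b = 4*e := ⟨b/4, by omega⟩
  have hNN : ∃ c, N^2 - N = 2*c := by
    rcases Int.even_or_odd N with ⟨c,hc⟩|⟨c,hc⟩
    · exact ⟨c*(2*c-1), by rw [hc]; ring⟩
    · exact ⟨c*(2*c+1), by rw [hc]; ring⟩
  obtain ⟨c, hc⟩ := hNN
  have h1 : ‖((b*(N^2-N) : ℤ) : ℤ_[2])‖ ≤ ((2:ℕ):ℝ)^(-(3:ℕ):ℤ) :=
    PadicInt.norm_int_le_pow_iff_dvd.mpr (by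
      refine (dvd_iff_exists_eq_mul_left.mpr ⟨e*c, ?_⟩)
      rw [he, hc]; push_cast; ring)
  have h2 : ‖((b*(2*N-1)+2 : ℤ) : ℤ_[2])‖ = 2⁻¹ := by
    have hsplit : ((b*(2*N-1)+2 : ℤ) : ℤ_[2]) = ((2:ℤ):ℤ_[2]) * ((2*e*(2*N-1)+1 : ℤ):ℤ_[2]) := by
      rw [he]; push_cast; ring
    rw [hsplit, norm_mul]
    have hn2 : ‖((2:ℤ):ℤ_[2])‖ = 2⁻¹ := by
      rw [show ((2:ℤ):ℤ_[2]) = ((2:ℕ):ℤ_[2]) from by norm_cast, PadicInt.norm_p]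
      norm_num
    have hn1 : ‖((2*e*(2*N-1)+1 : ℤ):ℤ_[2])‖ = 1 := by
      apply norm_int_one'
      intro ⟨d, hd⟩
      push_cast at hd
      obtain ⟨X, hX⟩ : ∃ X, e*(2*N-1) = X := ⟨_, rfl⟩
      rw [show 2*e*(2*N-1) = 2*X from by rw [← hX]; ring] at hd
      omega
    rw [hn2, hn1]; ring
  rw [h2]
  calc ‖((b*(N^2-N) : ℤ) : ℤ_[2])‖ ≤ ((2:ℕ):ℝ)^(-(3:ℕ):ℤ) := h1
    _ < (2⁻¹)^2 := by norm_num

-- branch D : p odd, p ∣ b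
lemma branchD {p : ℕ} [Fact p.Prime] (hp2 : p ≠ 2) (b N : ℤ) (hb : (p:ℤ) ∣ b) :
    ∃ x : ℤ_[p], (b:ℤ_[p])*(x^2-x) + 2*x = 2*(N:ℤ_[p]) := by
  apply onevar
  have hp3 : 3 ≤ p := by
    have h2 : 2 ≤ p := (Fact.out : p.Prime).two_le
    omega
  have h1 : ‖((b*(N^2-N) : ℤ) : ℤ_[p])‖ ≤ ((p:ℕ):ℝ)^(-(1:ℕ):ℤ) :=
    PadicInt.norm_int_le_pow_iff_dvd.mpr (by
      simpa using Dvd.dvd.mul_right hb (N^2-N))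
  have h2 : ‖((b*(2*N-1)+2 : ℤ) : ℤ_[p])‖ = 1 := by
    apply norm_int_one'
    intro hdvd
    have hd2 : (p:ℤ) ∣ 2 := by
      have := dvd_sub hdvd (Dvd.dvd.mul_right hb (2*N-1))
      simpa using this
    have := Int.le_of_dvd (by norm_num) hd2
    omega
  rw [h2]
  have hplt : (1:ℝ) < (p:ℝ) := by exact_mod_cast (Fact.out : p.Prime).one_lt
  calc ‖((b*(N^2-N) : ℤ) : ℤ_[p])‖ ≤ ((p:ℕ):ℝ)^(-(1:ℕ):ℤ) := h1
    _ < 1^2 := by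
        rw [one_pow]
        rw [show (-(1:ℕ):ℤ) = (-1:ℤ) from by norm_num, zpow_neg_one]
        exact inv_lt_one_of_one_lt₀ hplt

set_option maxHeartbeats 1000000 in
/-- for any escalation tuple `(a₁,…,a₅)` (i.e. `a₁ = 1` and
`aᵢ ≤ a_{i+1} ≤ a₁+⋯+aᵢ+1` for `i = 1,…,4`), the `m`-gonal form `⟨a₁,…,a₅⟩ₘ` locally
represents every positive integer for every `m ≥ 3`, i.e. `Σ aᵢP_m(xᵢ) = N` is solvable over
`ℤ_p` for every prime `p`.  The `m`-gonal equation is stated multiplied by `2` (an equivalent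
formulation, since `2` is a nonzerodivisor in `ℤ_p`). -/
theorem stmt17 (a : Fin 5 → ℤ) (ha : ∀ i, 0 < a i) (h0 : a 0 = 1)
    (hchain : ∀ i : Fin 4,
      a i.castSucc ≤ a i.succ ∧
      a i.succ ≤ (∑ j ∈ Finset.univ.filter (fun j => j ≤ i.castSucc), a j) + 1) :
    ∀ m : ℤ, 3 ≤ m → ∀ N : ℤ, 0 < N → ∀ (p : ℕ) [Fact p.Prime],
      ∃ x : Fin 5 → ℤ_[p],
        ∑ i, (a i : ℤ_[p]) * (((m : ℤ_[p]) - 2) * ((x i) ^ 2 - x i) + 2 * x i)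
          = 2 * (N : ℤ_[p]) := by
  -- extract concrete chain inequalities
  have h1 := hchain 0
  have h2 := hchain 1
  have h3 := hchain 2
  have h4 := hchain 3
  have e1 : (Finset.univ.filter (fun j => j ≤ (0:Fin 4).castSucc)) = ({0} : Finset (Fin 5)) := by decide
  have e2 : (Finset.univ.filter (fun j => j ≤ (1:Fin 4).castSucc)) = ({0,1} : Finset (Fin 5)) := by decide
  have e3 : (Finset.univ.filter (fun j => j ≤ (2:Fin 4).castSucc)) = ({0,1,2} : Finset (Fin 5)) := by decide
  have e4 : (Finset.univ.filter (fun j => j ≤ (3:Fin 4).castSucc)) = ({0,1,2,3} : Finset (Fin 5)) := by decide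
  rw [e1] at h1; rw [e2] at h2; rw [e3] at h3; rw [e4] at h4
  simp [Finset.sum_insert, Finset.mem_insert,
    show ((0:Fin 4).succ : Fin 5) = 1 from rfl, show ((1:Fin 4).succ : Fin 5) = 2 from rfl,
    show ((2:Fin 4).succ : Fin 5) = 3 from rfl, show ((3:Fin 4).succ : Fin 5) = 4 from rfl,
    show ((0:Fin 4).castSucc : Fin 5) = 0 from rfl, show ((1:Fin 4).castSucc : Fin 5) = 1 from rfl,
    show ((2:Fin 4).castSucc : Fin 5) = 2 from rfl, show ((3:Fin 4).castSucc : Fin 5) = 3 from rfl] at h1 h2 h3 h4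
  have hq2 : 1 ≤ a 1 ∧ a 1 ≤ 2 := by omega
  have hq3 : a 1 ≤ a 2 ∧ a 2 ≤ a 1 + 2 := by omega
  have hq4 : a 2 ≤ a 3 ∧ a 3 ≤ a 1 + a 2 + 2 := by omega
  have hq5 : a 3 ≤ a 4 ∧ a 4 ≤ a 1 + a 2 + a 3 + 2 := by omega
  intro m hm N hN p hp
  set b : ℤ := m - 2 with hbdef
  have hBeq : (m:ℤ_[p]) - 2 = ((b:ℤ):ℤ_[p]) := by rw [hbdef]; push_cast; ring
  simp only [hBeq]
  by_cases hp2 : p = 2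
  · subst hp2
    have h4cases : b % 4 = 0 ∨ b % 2 = 1 ∨ b % 4 = 2 := by omega
    rcases h4cases with hb | hb | hb
    · -- 4 ∣ b
      obtain ⟨x1, hx1⟩ := branchB b N hb
      refine ⟨![x1, 0, 0, 0, 0], ?_⟩
      simp [Fin.sum_univ_five, h0]
      linear_combination hx1
    · -- b odd
      obtain ⟨x1, hx1⟩ := branchA b N hb
      refine ⟨![x1, 0, 0, 0, 0], ?_⟩
      simp [Fin.sum_univ_five, h0]
      linear_combination hx1
    · -- b ≡ 2 mod 4 : hard 2-adic case
      obtain ⟨k, hk⟩ : ∃ k, b = 2*k := ⟨b/2, by omega⟩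
      have hkodd : k % 2 = 1 := by omega
      have hknorm : ‖(k:ℤ_[2])‖ = 1 := norm_int_one' (by
        intro ⟨d, hd⟩; omega)
      obtain ⟨v, hv⟩ := (PadicInt.isUnit_iff.mpr hknorm).exists_right_inv
      obtain ⟨t, ht⟩ : ∃ t, k - 1 = 2*t := ⟨(k-1)/2, by omega⟩
      set s : ℤ_[2] := (t:ℤ_[2]) * v with hsdef
      have hts : 2*(k:ℤ_[2])*s = (k:ℤ_[2]) - 1 := by
        have htc : ((k:ℤ_[2]) - 1) = 2*(t:ℤ_[2]) := by
          have : ((k - 1 : ℤ) : ℤ_[2]) = ((2*t : ℤ) : ℤ_[2]) := by rw [ht]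
          push_cast at this
          linear_combination this
        rw [hsdef]
        linear_combination 2*(t:ℤ_[2])*hv - htc
      obtain ⟨u1, u2, u3, u4, u5, hu⟩ := Ulem (a 1) (a 2) (a 3) (a 4) hq2 hq3 hq4 hq5
        (v*(N:ℤ_[2]) + s^2*(1 + (a 1 : ℤ_[2]) + (a 2) + (a 3) + (a 4)))
      have hterm : ∀ u : ℤ_[2], ((b:ℤ):ℤ_[2])*((u+s)^2 - (u+s)) + 2*(u+s)
          = 2*(k:ℤ_[2])*u^2 - 2*(k:ℤ_[2])*s^2 := by
        intro u
        have hbc : ((b:ℤ):ℤ_[2]) = 2*(k:ℤ_[2]) := by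
          rw [hk]; push_cast; ring
        rw [hbc]
        linear_combination (2*u+2*s)*hts
      refine ⟨![u1+s, u2+s, u3+s, u4+s, u5+s], ?_⟩
      simp only [Fin.sum_univ_five, Matrix.cons_val_zero, Matrix.cons_val_one, Matrix.head_cons,
        Matrix.cons_val_two, Matrix.cons_val_three, Matrix.cons_val_four, Matrix.tail_cons]
      rw [hterm u1, hterm u2, hterm u3, hterm u4, hterm u5, h0]
      push_cast
      linear_combination (2*(k:ℤ_[2]))*hu + (2*(N:ℤ_[2]))*hv
  · -- p odd
    have hp3 : 3 ≤ p := by have := (Fact.out : p.Prime).two_le; omega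
    by_cases hpb : (p:ℤ) ∣ b
    · obtain ⟨x1, hx1⟩ := branchD hp2 b N hpb
      refine ⟨![x1, 0, 0, 0, 0], ?_⟩
      simp [Fin.sum_univ_five, h0]
      linear_combination hx1
    · -- p ∤ b
      have hBnorm : ‖((b:ℤ):ℤ_[p])‖ = 1 := norm_int_one' hpb
      have hA2norm : ‖((a 1 : ℤ):ℤ_[p])‖ = 1 := norm_int_one' (by
        intro hd
        have := Int.le_of_dvd (by omega) hd
        omega)
      by_cases hd3 : (p:ℤ) ∣ a 2
      · -- p = 3, a 2 = 3
        have hple : (p:ℤ) ≤ a 2 := Int.le_of_dvd (ha 2) hd3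
        have hp3' : p = 3 := by
          have hnp : ¬ p = 4 := by
            intro h4
            rw [h4] at hp
            exact absurd hp.out (by norm_num)
          omega
        subst hp3'
        have ha2 : a 2 = 3 := by omega
        by_cases hd4 : (3:ℤ) ∣ a 3
        · by_cases hd5 : (3:ℤ) ∣ a 4
          · -- case F
            obtain ⟨c4, hc4⟩ : ∃ c4, a 3 = 3*c4 := ⟨a 3 / 3, by omega⟩
            obtain ⟨c5, hc5⟩ : ∃ c5, a 4 = 3*c5 := ⟨a 4 / 3, by omega⟩
            have hc4r : c4 = 1 ∨ c4 = 2 := by omega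
            have ha2r : a 1 = 1 ∨ a 1 = 2 := by omega
            -- units
            obtain ⟨w, hw⟩ := (PadicInt.isUnit_iff.mpr hBnorm).exists_right_inv
            have h2norm : ‖((2:ℤ):ℤ_[3])‖ = 1 := norm_int_one' (by norm_num)
            obtain ⟨i2, hi2⟩ := (PadicInt.isUnit_iff.mpr h2norm).exists_right_inv
            have hi2' : (2:ℤ_[3]) * i2 = 1 := by
              have : ((2:ℤ):ℤ_[3]) = (2:ℤ_[3]) := by push_cast; ring
              rw [this] at hi2; exact hi2
            set B : ℤ_[3] := ((b:ℤ):ℤ_[3]) with hBdef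
            set e : ℤ_[3] := (2 - B) * w * i2 with hedef
            have he : 2*B*e = 2 - B := by
              rw [hedef]
              linear_combination ((2-B)*2*i2)*hw + ((2-B))*hi2'
            set S : ℤ_[3] := 1 + (a 1 : ℤ_[3]) + (a 2 : ℤ_[3]) + (a 3 : ℤ_[3]) + (a 4 : ℤ_[3]) with hSdef
            obtain ⟨u1, u2, u3, u4, u5, hu⟩ := R3 (a 1) c4 c5 ha2r hc4r
              (w*(2*(N:ℤ_[3])) + e^2*S)
            have hterm : ∀ u : ℤ_[3], B*((u-e)^2 - (u-e)) + 2*(u-e) = B*u^2 - B*e^2 := by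
              intro u
              linear_combination (e-u)*he
            refine ⟨![u1-e, u2-e, u3-e, u4-e, u5-e], ?_⟩
            simp only [Fin.sum_univ_five, Matrix.cons_val_zero, Matrix.cons_val_one,
              Matrix.head_cons, Matrix.cons_val_two, Matrix.cons_val_three,
              Matrix.cons_val_four, Matrix.tail_cons]
            rw [hterm u1, hterm u2, hterm u3, hterm u4, hterm u5, h0]
            have ha2c : (a 2 : ℤ_[3]) = 3 := by rw [ha2]; push_cast; ring
            have ha3c : (a 3 : ℤ_[3]) = 3*(c4:ℤ_[3]) := by rw [hc4]; push_cast; ring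
            have ha4c : (a 4 : ℤ_[3]) = 3*(c5:ℤ_[3]) := by rw [hc5]; push_cast; ring
            rw [ha2c, ha3c, ha4c]
            push_cast
            push_cast [hSdef, ha2c, ha3c, ha4c] at hu
            linear_combination B*hu + 2*(N:ℤ_[3])*hw
          · -- Ecore with z in slot 4 (0-based), A3 = a 4
            have hA3norm : ‖((a 4 : ℤ):ℤ_[3])‖ = 1 := norm_int_one' hd5
            obtain ⟨x, y, z, hxyz⟩ := Ecore (by norm_num) ((b:ℤ):ℤ_[3]) _ _ (2*(N:ℤ_[3]))
              hBnorm hA2norm hA3norm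
            refine ⟨![x, y, 0, 0, z], ?_⟩
            simp [Fin.sum_univ_five, h0]
            linear_combination hxyz
        · -- Ecore with z in slot 3, A3 = a 3
          have hA3norm : ‖((a 3 : ℤ):ℤ_[3])‖ = 1 := norm_int_one' hd4
          obtain ⟨x, y, z, hxyz⟩ := Ecore (by norm_num) ((b:ℤ):ℤ_[3]) _ _ (2*(N:ℤ_[3]))
            hBnorm hA2norm hA3norm
          refine ⟨![x, y, 0, z, 0], ?_⟩
          simp [Fin.sum_univ_five, h0]
          linear_combination hxyz
      · -- Ecore with z in slot 2, A3 = a 2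
        have hA3norm : ‖((a 2 : ℤ):ℤ_[p])‖ = 1 := norm_int_one' hd3
        obtain ⟨x, y, z, hxyz⟩ := Ecore hp2 ((b:ℤ):ℤ_[p]) _ _ (2*(N:ℤ_[p]))
          hBnorm hA2norm hA3norm
        refine ⟨![x, y, z, 0, 0], ?_⟩
        simp [Fin.sum_univ_five, h0]
        linear_combination hxyz
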